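/- Let U ⊆ X be open convex and f ∈ C^{1u}(U,Y). If f′ takes U-bounded weakly p-compact subsets of U into relatively compact subsets of K(X,Y), then f′ : U → K(X,Y) is p-convergent: for every U-bounded sequence (x_n) weakly p-convergent to x ∈ U, f′(x_n) → f′(x) in operator norm. -/

import Mathlib

open Filter Topology Metric Set
open scoped ENNReal NNReal

section Defs

variable {X Y : Type*} [NormedAddCommGroup X] [NormedSpace ℝ X]
  [NormedAddCommGroup Y] [NormedSpace ℝ Y]

/-- A sequence `(x n)` in `X` is weakly `p`-summable if `(f (x n))ₙ ∈ ℓ_p` for every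
continuous linear functional `f` (for `p = ∞`, this means `(f (x n))ₙ ∈ c₀`). -/
def WeaklyLpSummable (p : ℝ≥0∞) (x : ℕ → X) : Prop :=
  ∀ f : X →L[ℝ] ℝ,
    if p = ⊤ then Filter.Tendsto (fun n => f (x n)) Filter.atTop (nhds 0)
    else Memℓp (fun n => f (x n)) p

/-- A sequence is weakly `p`-Cauchy if all difference sequences along pairs of strictly
monotone index sequences are weakly `p`-summable. -/
def WeaklyLpCauchy (p : ℝ≥0∞) (x : ℕ → X) : Prop :=
  ∀ m k : ℕ → ℕ, StrictMono m → StrictMono k →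
    WeaklyLpSummable p (fun i => x (m i) - x (k i))

/-- `(x n)` is weakly `p`-convergent to `x₀` if `(x n - x₀)` is weakly `p`-summable. -/
def WeaklyLpConvergentTo (p : ℝ≥0∞) (x : ℕ → X) (x₀ : X) : Prop :=
  WeaklyLpSummable p (fun n => x n - x₀)

/-- A set `K ⊆ L(X,Y)` is uniformly `p`-convergent if `lim_n sup_{T ∈ K} ‖T (x n)‖ = 0`
for every weakly `p`-summable sequence `(x n)`. -/
def UniformlyPConvergent (p : ℝ≥0∞) (K : Set (X →L[ℝ] Y)) : Prop :=
  ∀ x : ℕ → X, WeaklyLpSummable p x →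
    ∀ ε > 0, ∃ N : ℕ, ∀ n ≥ N, ∀ T ∈ K, ‖T (x n)‖ < ε

/-- `B` is `U`-bounded: contained in `U`, bounded, and at positive distance from `∂U`. -/
def UBounded (U B : Set X) : Prop :=
  B ⊆ U ∧ Bornology.IsBounded B ∧ ∃ r > 0, ∀ b ∈ B, Metric.ball b r ⊆ U

/-- A sequence is `U`-bounded if its range is a `U`-bounded set. -/
def UBoundedSeq (U : Set X) (x : ℕ → X) : Prop :=
  UBounded U (Set.range x)

/-- `f ∈ C^{1u}(U,Y)`: `f` is differentiable on `U` with derivative `f'` which is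
uniformly continuous on `U`-bounded subsets of `U`. -/
def C1u (U : Set X) (f : X → Y) (f' : X → X →L[ℝ] Y) : Prop :=
  (∀ x ∈ U, HasFDerivAt f (f' x) x) ∧
  ∀ B : Set X, UBounded U B → UniformContinuousOn f' B

/-- `T` is a `p`-convergent operator: it maps weakly `p`-summable sequences to norm-null
sequences. -/
def PConvergentOp (p : ℝ≥0∞) (T : X →L[ℝ] Y) : Prop :=
  ∀ x : ℕ → X, WeaklyLpSummable p x →
    Filter.Tendsto (fun n => ‖T (x n)‖) Filter.atTop (nhds 0)

/-- `f` is weakly `p`-sequentially continuous on `U`: it maps `U`-bounded weakly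
`p`-Cauchy sequences to norm convergent sequences. -/
def WeaklyPSeqCont (p : ℝ≥0∞) (U : Set X) (f : X → Y) : Prop :=
  ∀ x : ℕ → X, UBoundedSeq U x → WeaklyLpCauchy p x →
    ∃ l : Y, Filter.Tendsto (fun n => f (x n)) Filter.atTop (nhds l)

/-- `K` is weakly `p`-precompact: every sequence in `K` has a weakly `p`-Cauchy
subsequence. -/
def WeaklyPPrecompact (p : ℝ≥0∞) (K : Set X) : Prop :=
  ∀ x : ℕ → X, (∀ n, x n ∈ K) →
    ∃ m : ℕ → ℕ, StrictMono m ∧ WeaklyLpCauchy p (fun i => x (m i))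

end Defs

section Aux
variable {X Y : Type*} [NormedAddCommGroup X] [NormedSpace ℝ X]
  [NormedAddCommGroup Y] [NormedSpace ℝ Y]

lemma aux_meanValue {f : X → Y} {f' : X → X →L[ℝ] Y} {s : Set X}
    (hs : Convex ℝ s) (hder : ∀ z ∈ s, HasFDerivAt f (f' z) z)
    {a b : X} (ha : a ∈ s) (hb : b ∈ s) {ε : ℝ}
    (hbd : ∀ z ∈ s, ‖f' z - f' a‖ ≤ ε) :
    ‖f b - f a - f' a (b - a)‖ ≤ ε * ‖b - a‖ := by
  have hgder : ∀ z ∈ s, HasFDerivWithinAt (fun z => f z - f' a z) (f' z - f' a) s z := fun z hz =>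
    ((hder z hz).sub ((f' a).hasFDerivAt)).hasFDerivWithinAt
  have key := hs.norm_image_sub_le_of_norm_hasFDerivWithin_le hgder hbd ha hb
  have heq : f b - f a - f' a (b - a) = (f b - f' a b) - (f a - f' a a) := by
    rw [map_sub]; abel
  rw [heq]; exact key

lemma aux_weakly_null {p : ℝ≥0∞} (hp : 1 ≤ p) (hp' : p ≠ ⊤) {w : ℕ → X}
    (hw : WeaklyLpSummable p w) (g : X →L[ℝ] ℝ) :
    Tendsto (fun n => g (w n)) atTop (𝓝 0) := by
  have h := hw g
  rw [if_neg hp'] at h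
  have hp0 : p ≠ 0 := fun h0 => by simp [h0] at hp
  have hq : 0 < p.toReal := ENNReal.toReal_pos hp0 hp'
  have hs := h.summable hq
  have h0 : Tendsto (fun n => ‖g (w n)‖ ^ p.toReal) atTop (𝓝 0) := hs.tendsto_atTop_zero
  have hcont : ContinuousAt (fun x : ℝ => x ^ p.toReal⁻¹) 0 :=
    Real.continuousAt_rpow_const 0 p.toReal⁻¹ (Or.inr (inv_nonneg.mpr hq.le))
  have h1 : Tendsto (fun n => (‖g (w n)‖ ^ p.toReal) ^ p.toReal⁻¹) atTop
      (𝓝 ((0:ℝ) ^ p.toReal⁻¹)) := (hcont.tendsto).comp h0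
  rw [Real.zero_rpow (inv_ne_zero hq.ne')] at h1
  have h2 : Tendsto (fun n => ‖g (w n)‖) atTop (𝓝 0) := by
    convert h1 using 2 with n
    rw [← Real.rpow_mul (norm_nonneg _), mul_inv_cancel₀ hq.ne', Real.rpow_one]
  exact tendsto_zero_iff_norm_tendsto_zero.mpr h2

lemma aux_compact_cc {T : X →L[ℝ] Y} (hT : IsCompactOperator T)
    {w : ℕ → X} {C : ℝ} (hwb : ∀ n, ‖w n‖ ≤ C)
    (hwnull : ∀ g : X →L[ℝ] ℝ, Tendsto (fun n => g (w n)) atTop (𝓝 0)) :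
    Tendsto (fun n => T (w n)) atTop (𝓝 0) := by
  apply tendsto_of_subseq_tendsto
  intro ns hns
  have hb : Bornology.IsBounded (Set.range w) := by
    rw [isBounded_iff_forall_norm_le]
    exact ⟨C, fun z ⟨n, hn⟩ => hn ▸ hwb n⟩
  have hT' : IsCompactOperator (T.toLinearMap : X →ₛₗ[RingHom.id ℝ] Y) := hT
  obtain ⟨K, hK, hKsub⟩ := hT'.image_subset_compact_of_bounded hb
  have hmem : ∀ j, T (w (ns j)) ∈ K := fun j => hKsub ⟨w (ns j), ⟨ns j, rfl⟩, rfl⟩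
  obtain ⟨a, _, φ, hφ, hTend⟩ := hK.isSeqCompact hmem
  have ha : a = 0 := by
    apply NormedSpace.eq_zero_of_forall_dual_eq_zero ℝ
    intro g
    have h1 : Tendsto (fun j => g (T (w (ns (φ j))))) atTop (𝓝 (g a)) :=
      (g.continuous.tendsto a).comp hTend
    have h2 : Tendsto (fun j => g (T (w (ns (φ j))))) atTop (𝓝 0) := by
      have := (hwnull (g.comp T)).comp (hns.comp hφ.tendsto_atTop)
      exact this
    exact tendsto_nhds_unique h1 h2
  exact ⟨φ, by rw [← ha]; exact hTend⟩

lemma aux_unif {D : Set (X →L[ℝ] Y)} (hD : TotallyBounded D)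
    {w : ℕ → X} {C : ℝ} (hC : 0 ≤ C) (hwb : ∀ n, ‖w n‖ ≤ C)
    (hnull : ∀ S ∈ D, Tendsto (fun n => S (w n)) atTop (𝓝 0))
    {ε : ℝ} (hε : 0 < ε) : ∃ N, ∀ n ≥ N, ∀ S ∈ D, ‖S (w n)‖ < ε := by
  have hη : 0 < ε / (2 * (C + 1)) := by positivity
  obtain ⟨t, hts, htf, hcov⟩ := totallyBounded_iff_subset.1 hD _ (Metric.dist_mem_uniformity hη)
  have key : ∀ S₀ ∈ t, ∃ N, ∀ n ≥ N, ‖S₀ (w n)‖ < ε / 2 := by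
    intro S₀ hS₀
    have h0 := (hnull S₀ (hts hS₀)).norm
    rw [Metric.tendsto_atTop] at h0
    obtain ⟨N, hN⟩ := h0 (ε / 2) (by positivity)
    exact ⟨N, fun n hn => by simpa [Real.dist_eq, abs_of_nonneg (norm_nonneg _)] using hN n hn⟩
  choose! N hN using key
  refine ⟨htf.toFinset.sup N, fun n hn S hS => ?_⟩
  obtain ⟨S₀, hS₀t, hSd⟩ : ∃ S₀ ∈ t, dist S S₀ < ε / (2 * (C + 1)) := by
    have := hcov hS
    simpa using this
  have hn' : n ≥ N S₀ := le_trans (Finset.le_sup (htf.mem_toFinset.2 hS₀t)) hn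
  have h1 : ‖S (w n)‖ ≤ ‖(S - S₀) (w n)‖ + ‖S₀ (w n)‖ := by
    have : S (w n) = (S - S₀) (w n) + S₀ (w n) := by simp
    rw [this]; exact norm_add_le _ _
  have h2 : ‖(S - S₀) (w n)‖ ≤ ‖S - S₀‖ * C := by
    calc ‖(S - S₀) (w n)‖ ≤ ‖S - S₀‖ * ‖w n‖ := (S - S₀).le_opNorm _
    _ ≤ ‖S - S₀‖ * C := by
        exact mul_le_mul_of_nonneg_left (hwb n) (norm_nonneg _)
  have h3 : ‖S - S₀‖ * C < ε / 2 := by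
    rw [dist_eq_norm] at hSd
    have : ‖S - S₀‖ * C ≤ (ε / (2 * (C + 1))) * C :=
      mul_le_mul_of_nonneg_right hSd.le hC
    refine lt_of_le_of_lt this ?_
    rw [div_mul_eq_mul_div, div_lt_iff₀ (by positivity)]
    ring_nf
    nlinarith
  have h4 := hN S₀ hS₀t n hn'
  calc ‖S (w n)‖ ≤ ‖(S - S₀) (w n)‖ + ‖S₀ (w n)‖ := h1
  _ ≤ ‖S - S₀‖ * C + ‖S₀ (w n)‖ := by linarith
  _ < ε / 2 + ε / 2 := by linarith
  _ = ε := by ring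

lemma aux_UBounded_subset {U A B : Set X} (hB : UBounded U B) (hAB : A ⊆ B) : UBounded U A := by
  obtain ⟨h1, h2, r, hr, h3⟩ := hB
  exact ⟨hAB.trans h1, h2.subset hAB, r, hr, fun b hb => h3 b (hAB hb)⟩

lemma aux_fcont {p : ℝ≥0∞} (hp : 1 ≤ p) (hp' : p ≠ ⊤)
    {U : Set X} (hUc : Convex ℝ U)
    {f : X → Y} {f' : X → X →L[ℝ] Y} (hf : C1u U f f')
    (H : ∀ (c : ℕ → X) (c₀ : X), c₀ ∈ U → UBounded U (Set.range c ∪ {c₀}) →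
      WeaklyLpConvergentTo p c c₀ →
      (∀ z ∈ Set.range c ∪ {c₀}, IsCompactOperator (f' z)) ∧
      IsCompact (closure (f' '' (Set.range c ∪ {c₀}))))
    (c : ℕ → X) (c₀ : X) (hc₀ : c₀ ∈ U) (hcB : UBounded U (Set.range c ∪ {c₀}))
    (hconv : WeaklyLpConvergentTo p c c₀) :
    Tendsto (fun n => f (c n)) atTop (𝓝 (f c₀)) := by
  obtain ⟨hMU, hMb, r, hr, hball⟩ := hcB
  set w : ℕ → X := fun n => c n - c₀ with hw
  obtain ⟨C0, hC0⟩ := isBounded_iff_forall_norm_le.1 hMb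
  have hc₀M : c₀ ∈ Set.range c ∪ {c₀} := Set.mem_union_right _ rfl
  have hcnM : ∀ n, c n ∈ Set.range c ∪ {c₀} := fun n => Set.mem_union_left _ ⟨n, rfl⟩
  set R : ℝ := C0 + C0 with hRdef
  have hR : ∀ n, ‖w n‖ ≤ R := fun n =>
    (norm_sub_le _ _).trans (add_le_add (hC0 _ (hcnM n)) (hC0 _ hc₀M))
  have hR0 : 0 ≤ R := le_trans (norm_nonneg _) (hR 0)
  -- the union of segments
  set B : Set X := {z | ∃ t : ℝ, t ∈ Set.Icc (0:ℝ) 1 ∧ ∃ n, z = c₀ + t • w n} with hBdef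
  have hBall : ∀ b ∈ B, Metric.ball b r ⊆ U := by
    rintro b ⟨t, ⟨ht0, ht1⟩, n, rfl⟩ y hy
    rw [mem_ball, dist_eq_norm] at hy
    set v : X := y - (c₀ + t • w n) with hv
    have hyv : y = (1 - t) • (c₀ + v) + t • (c n + v) := by
      have : y = (c₀ + t • (c n - c₀)) + v := by rw [hv]; abel
      rw [this]; module
    rw [hyv]
    have h1 : c₀ + v ∈ U := hball c₀ hc₀M (by
      rw [mem_ball, dist_eq_norm]; simpa using hy)
    have h2 : c n + v ∈ U := hball (c n) (hcnM n) (by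
      rw [mem_ball, dist_eq_norm]; simpa using hy)
    exact hUc h1 h2 (by linarith) ht0 (by ring)
  have hBU : B ⊆ U := fun b hb => hBall b hb (mem_ball_self hr)
  have hBbdd : Bornology.IsBounded B := by
    apply (Metric.isBounded_closedBall (x := c₀) (r := R)).subset
    rintro b ⟨t, ⟨ht0, ht1⟩, n, rfl⟩
    rw [Metric.mem_closedBall, dist_eq_norm]
    have : c₀ + t • w n - c₀ = t • w n := by abel
    rw [this, norm_smul, Real.norm_eq_abs, abs_of_nonneg ht0]
    calc t * ‖w n‖ ≤ 1 * R := mul_le_mul ht1 (hR n) (norm_nonneg _) zero_le_one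
    _ = R := one_mul R
  have hBUb : UBounded U B := ⟨hBU, hBbdd, r, hr, hBall⟩
  have hc₀B : c₀ ∈ B := ⟨0, ⟨le_refl 0, zero_le_one⟩, 0, by simp⟩
  -- uniform continuity of f' on B
  have hUC := (hf.2 B hBUb)
  rw [Metric.uniformContinuousOn_iff] at hUC
  -- weakly null
  have hwnull : ∀ g : X →L[ℝ] ℝ, Tendsto (fun n => g (w n)) atTop (𝓝 0) :=
    aux_weakly_null hp hp' hconv
  -- main estimate
  rw [Metric.tendsto_atTop]
  intro ε hε
  set ε₁ : ℝ := ε / (2 * (R + 1)) with hε₁def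
  have hε₁ : 0 < ε₁ := by positivity
  obtain ⟨δ, hδ, hδuc⟩ := hUC ε₁ hε₁
  obtain ⟨m', hm'⟩ := exists_nat_gt (R / δ)
  set m : ℕ := max m' 1 with hmdef
  have hm1 : 1 ≤ m := le_max_right _ _
  have hmpos : (0:ℝ) < m := by exact_mod_cast hm1
  have hRmδ : R / m < δ := by
    rw [div_lt_iff₀ hmpos]
    have : R / δ < m := lt_of_lt_of_le hm' (by exact_mod_cast le_max_left m' 1)
    rw [div_lt_iff₀ hδ] at this
    linarith [this]
  -- the intermediate points
  set y : ℕ → ℕ → X := fun i n => c₀ + ((i:ℝ)/m) • w n with hydef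
  have hy_memB : ∀ i ≤ m, ∀ n, y i n ∈ B := by
    intro i hi n
    exact ⟨(i:ℝ)/m, ⟨by positivity, by
      rw [div_le_one hmpos]; exact_mod_cast hi⟩, n, rfl⟩
  have hydiff : ∀ i n, y (i+1) n - y i n = ((1:ℝ)/m) • w n := by
    intro i n
    have : y (i+1) n - y i n = (((i:ℝ)+1)/m - (i:ℝ)/m) • w n := by
      rw [hydef]; push_cast; rw [sub_smul]; abel
    rw [this]
    congr 1
    field_simp
    ring
  -- mean value estimate on each subsegment
  have hstep : ∀ n, ∀ i < m,
      ‖f (y (i+1) n) - f (y i n) - (f' (y i n)) (((1:ℝ)/m) • w n)‖ ≤ ε₁ * (R / m) := by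
    intro n i hi
    have hsub : segment ℝ (y i n) (y (i+1) n) ⊆ B := by
      rw [segment_eq_image']
      rintro z ⟨θ, ⟨hθ0, hθ1⟩, rfl⟩
      rw [hydiff]
      refine ⟨(i:ℝ)/m + θ/m, ⟨by positivity, ?_⟩, n, ?_⟩
      · rw [← add_div, div_le_one hmpos]
        have : (i:ℝ) + 1 ≤ m := by exact_mod_cast hi
        linarith
      · rw [hydef]; simp only []; rw [smul_smul, add_smul]
        have : θ * ((1:ℝ)/m) = θ/m := by ring
        rw [this]; abel
    have hclose : ∀ z ∈ segment ℝ (y i n) (y (i+1) n), ‖f' z - f' (y i n)‖ ≤ ε₁ := by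
      intro z hz
      have hzB : z ∈ B := hsub hz
      have hyB : y i n ∈ B := hy_memB i hi.le n
      have hdist : dist z (y i n) < δ := by
        rw [segment_eq_image'] at hz
        obtain ⟨θ, ⟨hθ0, hθ1⟩, rfl⟩ := hz
        rw [dist_eq_norm]
        have : y i n + θ • (y (i+1) n - y i n) - y i n = θ • (y (i+1) n - y i n) := by abel
        rw [this, hydiff, norm_smul, norm_smul, Real.norm_eq_abs, Real.norm_eq_abs,
          abs_of_nonneg hθ0, abs_of_nonneg (by positivity : (0:ℝ) ≤ 1/m)]
        calc θ * (1/m * ‖w n‖) ≤ 1 * (1/m * R) := by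
              apply mul_le_mul hθ1 _ (by positivity) zero_le_one
              exact mul_le_mul_of_nonneg_left (hR n) (by positivity)
        _ = R / m := by ring
        _ < δ := hRmδ
      have := hδuc z hzB (y i n) hyB hdist
      rw [dist_eq_norm] at this
      exact this.le
    have hder : ∀ z ∈ segment ℝ (y i n) (y (i+1) n), HasFDerivAt f (f' z) z :=
      fun z hz => hf.1 z (hBU (hsub hz))
    have := aux_meanValue (convex_segment _ _) hder (left_mem_segment ℝ _ _)
      (right_mem_segment ℝ _ _) hclose
    rw [hydiff] at this
    refine le_trans this ?_
    apply mul_le_mul_of_nonneg_left _ hε₁.le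
    rw [norm_smul, Real.norm_eq_abs, abs_of_nonneg (by positivity : (0:ℝ) ≤ 1/m)]
    calc 1/m * ‖w n‖ ≤ 1/m * R := mul_le_mul_of_nonneg_left (hR n) (by positivity)
    _ = R / m := by ring
  -- telescoping
  have htel : ∀ n, f (c n) - f c₀ = ∑ i ∈ Finset.range m, (f (y (i+1) n) - f (y i n)) := by
    intro n
    rw [Finset.sum_range_sub (fun i => f (y i n))]
    congr 2
    · rw [hydef]; simp only []
      rw [div_self (ne_of_gt hmpos), one_smul]
      simp [hw]
    · rw [hydef]; simp
  have hpart1 : ∀ n,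
      ‖f (c n) - f c₀ - ∑ i ∈ Finset.range m, (f' (y i n)) (((1:ℝ)/m) • w n)‖ ≤ ε₁ * R := by
    intro n
    have : f (c n) - f c₀ - ∑ i ∈ Finset.range m, (f' (y i n)) (((1:ℝ)/m) • w n)
        = ∑ i ∈ Finset.range m,
          (f (y (i+1) n) - f (y i n) - (f' (y i n)) (((1:ℝ)/m) • w n)) := by
      rw [Finset.sum_sub_distrib, ← htel n]
    rw [this]
    calc ‖∑ i ∈ Finset.range m, (f (y (i+1) n) - f (y i n) - (f' (y i n)) (((1:ℝ)/m) • w n))‖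
        ≤ ∑ i ∈ Finset.range m, ‖f (y (i+1) n) - f (y i n) - (f' (y i n)) (((1:ℝ)/m) • w n)‖ :=
          norm_sum_le _ _
    _ ≤ ∑ _i ∈ Finset.range m, ε₁ * (R / m) :=
          Finset.sum_le_sum (fun i hi => hstep n i (Finset.mem_range.1 hi))
    _ = m * (ε₁ * (R / m)) := by rw [Finset.sum_const, Finset.card_range, nsmul_eq_mul]
    _ = ε₁ * R := by field_simp
  -- part 2 : the derivative terms go to zero
  have key : ∀ i ≤ m, ∃ N, ∀ n ≥ N, ‖(f' (y i n)) (w n)‖ < ε / 2 := by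
    intro i hi
    have hsub : Set.range (fun n => y i n) ∪ {c₀} ⊆ B := by
      rintro z (⟨n, rfl⟩ | rfl)
      · exact hy_memB i hi n
      · exact hc₀B
    have hub : UBounded U (Set.range (fun n => y i n) ∪ {c₀}) :=
      aux_UBounded_subset hBUb hsub
    have hconv' : WeaklyLpConvergentTo p (fun n => y i n) c₀ := by
      intro g
      rw [if_neg hp']
      have h0 := hconv g
      rw [if_neg hp'] at h0
      have h1 := h0.const_smul ((i:ℝ)/m)
      have heq : (fun n => g ((fun n => y i n) n - c₀))
          = ((i:ℝ)/m) • fun n => g (w n) := by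
        funext n
        show g (c₀ + ((i:ℝ)/m) • w n - c₀) = (((i:ℝ)/m) • fun n => g (w n)) n
        rw [add_sub_cancel_left, map_smul, smul_eq_mul, Pi.smul_apply, smul_eq_mul]
      rw [heq]
      exact h1
    obtain ⟨hcpts, hcl⟩ := H (fun n => y i n) c₀ hc₀ hub hconv'
    have hTB : TotallyBounded (f' '' (Set.range (fun n => y i n) ∪ {c₀})) :=
      hcl.totallyBounded.subset subset_closure
    have hnull : ∀ S ∈ f' '' (Set.range (fun n => y i n) ∪ {c₀}),
        Tendsto (fun n => S (w n)) atTop (𝓝 0) := by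
      rintro S ⟨z, hz, rfl⟩
      exact aux_compact_cc (hcpts z hz) hR hwnull
    obtain ⟨N, hN⟩ := aux_unif hTB hR0 hR hnull (by positivity : (0:ℝ) < ε / 2)
    exact ⟨N, fun n hn => hN n hn _ ⟨y i n, Set.mem_union_left _ ⟨n, rfl⟩, rfl⟩⟩
  choose! N hN using key
  refine ⟨(Finset.range (m+1)).sup N, fun n hn => ?_⟩
  rw [dist_eq_norm]
  have hpart2 : ‖∑ i ∈ Finset.range m, (f' (y i n)) (((1:ℝ)/m) • w n)‖ < ε / 2 := by
    calc ‖∑ i ∈ Finset.range m, (f' (y i n)) (((1:ℝ)/m) • w n)‖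
        ≤ ∑ i ∈ Finset.range m, ‖(f' (y i n)) (((1:ℝ)/m) • w n)‖ := norm_sum_le _ _
    _ < ∑ _i ∈ Finset.range m, (1/m) * (ε/2) := by
        apply Finset.sum_lt_sum_of_nonempty
        · exact ⟨0, Finset.mem_range.2 hm1⟩
        · intro i hi
          have him : i ≤ m := (Finset.mem_range.1 hi).le
          have hni : n ≥ N i := le_trans
            (Finset.le_sup (Finset.mem_range.2 (Nat.lt_succ_of_le him))) hn
          have := hN i him n hni
          rw [map_smul, norm_smul, Real.norm_eq_abs,
            abs_of_nonneg (by positivity : (0:ℝ) ≤ 1/m)]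
          exact mul_lt_mul_of_pos_left this (by positivity)
    _ = m * ((1/m) * (ε/2)) := by rw [Finset.sum_const, Finset.card_range, nsmul_eq_mul]
    _ = ε / 2 := by field_simp
  have hε₁R : ε₁ * R < ε / 2 := by
    rw [hε₁def, div_mul_eq_mul_div, div_lt_iff₀ (by positivity)]
    nlinarith
  have h3 := norm_sub_norm_le (f (c n) - f c₀)
    (∑ i ∈ Finset.range m, (f' (y i n)) (((1:ℝ)/m) • w n))
  have h1 := hpart1 n
  linarith
lemma aux_insert {U : Set X} (hU : IsOpen U) {x : ℕ → X} {x₀ : X} (hx₀ : x₀ ∈ U)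
    (hxb : UBoundedSeq U x) : UBounded U (Set.range x ∪ {x₀}) := by
  obtain ⟨h1, h2, r, hr, h3⟩ := hxb
  obtain ⟨r₀, hr₀, hball₀⟩ := Metric.isOpen_iff.1 hU x₀ hx₀
  refine ⟨Set.union_subset h1 (by simpa using hx₀),
    h2.union Bornology.isBounded_singleton, min r r₀, lt_min hr hr₀, ?_⟩
  rintro b (hb | rfl)
  · exact (Metric.ball_subset_ball (min_le_left _ _)).trans (h3 b hb)
  · exact (Metric.ball_subset_ball (min_le_right _ _)).trans hball₀

lemma aux_ptwise {p : ℝ≥0∞} (hp : 1 ≤ p) (hp' : p ≠ ⊤)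
    {U : Set X} (hU : IsOpen U) (hUc : Convex ℝ U)
    {f : X → Y} {f' : X → X →L[ℝ] Y} (hf : C1u U f f')
    (H : ∀ (c : ℕ → X) (c₀ : X), c₀ ∈ U → UBounded U (Set.range c ∪ {c₀}) →
      WeaklyLpConvergentTo p c c₀ →
      (∀ z ∈ Set.range c ∪ {c₀}, IsCompactOperator (f' z)) ∧
      IsCompact (closure (f' '' (Set.range c ∪ {c₀}))))
    (x : ℕ → X) (x₀ : X) (hx₀ : x₀ ∈ U) (hxb : UBoundedSeq U x)
    (hxc : WeaklyLpConvergentTo p x x₀) (h : X) :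
    Tendsto (fun n => f' (x n) h) atTop (𝓝 (f' x₀ h)) := by
  obtain ⟨hMU, hMb, r, hr, hball⟩ := aux_insert hU hx₀ hxb
  have hMfull : UBounded U (Set.range x ∪ {x₀}) := ⟨hMU, hMb, r, hr, hball⟩
  set B : Set X := {b | ∃ z ∈ Set.range x ∪ {x₀}, ‖b - z‖ ≤ r/2} with hBdef
  have hr2 : (0:ℝ) < r/2 := by positivity
  have hBall : ∀ b ∈ B, Metric.ball b (r/2) ⊆ U := by
    rintro b ⟨z, hz, hbz⟩ yy hyy
    apply hball z hz
    rw [mem_ball] at hyy ⊢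
    calc dist yy z ≤ dist yy b + dist b z := dist_triangle _ _ _
    _ < r/2 + r/2 := add_lt_add_of_lt_of_le hyy (by rw [dist_eq_norm]; exact hbz)
    _ = r := by ring
  have hBU : B ⊆ U := fun b hb => hBall b hb (mem_ball_self hr2)
  have hBbdd : Bornology.IsBounded B := by
    obtain ⟨C0, hC0⟩ := isBounded_iff_forall_norm_le.1 hMb
    rw [isBounded_iff_forall_norm_le]
    refine ⟨C0 + r/2, ?_⟩
    rintro b ⟨z, hz, hbz⟩
    calc ‖b‖ = ‖(b - z) + z‖ := by rw [sub_add_cancel]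
    _ ≤ ‖b - z‖ + ‖z‖ := norm_add_le _ _
    _ ≤ r/2 + C0 := add_le_add hbz (hC0 z hz)
    _ = C0 + r/2 := by ring
  have hBUb : UBounded U B := ⟨hBU, hBbdd, r/2, hr2, hBall⟩
  have hMsubB : ∀ z ∈ Set.range x ∪ {x₀}, z ∈ B :=
    fun z hz => ⟨z, hz, by simp [hr2.le]⟩
  have hUC := hf.2 B hBUb
  rw [Metric.uniformContinuousOn_iff] at hUC
  rw [Metric.tendsto_atTop]
  intro ε hε
  set ε₁ : ℝ := ε / (4 * (‖h‖ + 1)) with hε₁def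
  have hε₁ : 0 < ε₁ := by positivity
  obtain ⟨δ, hδ, hδuc⟩ := hUC ε₁ hε₁
  set d : ℝ := min δ (r/2) with hddef
  have hd : 0 < d := lt_min hδ hr2
  set s : ℝ := d / (2 * (‖h‖ + 1)) with hsdef
  have hs : 0 < s := by positivity
  have hsh : s * ‖h‖ ≤ d / 2 := by
    rw [hsdef, div_mul_eq_mul_div, div_le_div_iff₀ (by positivity) two_pos]
    nlinarith [norm_nonneg h, hd.le]
  have hshδ : s * ‖h‖ < δ :=
    lt_of_le_of_lt hsh (lt_of_lt_of_le (half_lt_self hd) (min_le_left _ _))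
  have hshr : s * ‖h‖ ≤ r/2 := hsh.trans ((half_le_self hd.le).trans (min_le_right _ _))
  have hmv : ∀ z ∈ Set.range x ∪ {x₀},
      ‖f (z + s • h) - f z - (f' z) (s • h)‖ ≤ ε₁ * (s * ‖h‖) := by
    intro z hz
    have hseg : ∀ zz ∈ segment ℝ z (z + s • h), ‖zz - z‖ ≤ s * ‖h‖ := by
      intro zz hzz
      rw [segment_eq_image'] at hzz
      obtain ⟨θ, ⟨hθ0, hθ1⟩, rfl⟩ := hzz
      rw [add_sub_cancel_left, add_sub_cancel_left, norm_smul, norm_smul,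
        Real.norm_eq_abs, Real.norm_eq_abs, abs_of_nonneg hθ0, abs_of_nonneg hs.le]
      calc θ * (s * ‖h‖) ≤ 1 * (s * ‖h‖) :=
        mul_le_mul_of_nonneg_right hθ1 (by positivity)
      _ = s * ‖h‖ := one_mul _
    have hsub : segment ℝ z (z + s • h) ⊆ B := fun zz hzz =>
      ⟨z, hz, (hseg zz hzz).trans hshr⟩
    have hclose : ∀ zz ∈ segment ℝ z (z + s • h), ‖f' zz - f' z‖ ≤ ε₁ := by
      intro zz hzz
      have := hδuc zz (hsub hzz) z (hMsubB z hz)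
        (by rw [dist_eq_norm]; exact lt_of_le_of_lt (hseg zz hzz) hshδ)
      rw [dist_eq_norm] at this
      exact this.le
    have hder : ∀ zz ∈ segment ℝ z (z + s • h), HasFDerivAt f (f' zz) zz :=
      fun zz hzz => hf.1 zz (hBU (hsub hzz))
    have := aux_meanValue (convex_segment _ _) hder (left_mem_segment ℝ _ _)
      (right_mem_segment ℝ _ _) hclose
    rw [add_sub_cancel_left] at this
    refine this.trans (le_of_eq ?_)
    rw [norm_smul, Real.norm_eq_abs, abs_of_nonneg hs.le]
  have lim1 : Tendsto (fun n => f (x n)) atTop (𝓝 (f x₀)) :=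
    aux_fcont hp hp' hUc hf H x x₀ hx₀ hMfull hxc
  have hx₀B : x₀ + s • h ∈ B := by
    refine ⟨x₀, Set.mem_union_right _ rfl, ?_⟩
    rw [add_sub_cancel_left, norm_smul, Real.norm_eq_abs, abs_of_nonneg hs.le]
    exact hshr
  have hx₀sh : x₀ + s • h ∈ U := hBU hx₀B
  have hsub2 : Set.range (fun n => x n + s • h) ∪ {x₀ + s • h} ⊆ B := by
    rintro z (⟨n, rfl⟩ | rfl)
    · refine ⟨x n, Set.mem_union_left _ ⟨n, rfl⟩, ?_⟩
      rw [add_sub_cancel_left, norm_smul, Real.norm_eq_abs, abs_of_nonneg hs.le]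
      exact hshr
    · exact hx₀B
  have hub2 := aux_UBounded_subset hBUb hsub2
  have hconv2 : WeaklyLpConvergentTo p (fun n => x n + s • h) (x₀ + s • h) := by
    show WeaklyLpSummable p (fun n => (x n + s • h) - (x₀ + s • h))
    have heq : (fun n => (x n + s • h) - (x₀ + s • h)) = (fun n => x n - x₀) :=
      funext fun n => by abel
    rw [heq]
    exact hxc
  have lim2 : Tendsto (fun n => f (x n + s • h)) atTop (𝓝 (f (x₀ + s • h))) :=
    aux_fcont hp hp' hUc hf H _ _ hx₀sh hub2 hconv2
  have limU : Tendsto (fun n => (f (x n + s • h) - f (x n))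
      - (f (x₀ + s • h) - f x₀)) atTop (𝓝 0) :=
    tendsto_sub_nhds_zero_iff.mpr (lim2.sub lim1)
  rw [Metric.tendsto_atTop] at limU
  obtain ⟨N, hN⟩ := limU (s * (ε/8)) (by positivity)
  refine ⟨N, fun n hn => ?_⟩
  have e1 := hmv (x n) (Set.mem_union_left _ ⟨n, rfl⟩)
  have e2 := hmv x₀ (Set.mem_union_right _ rfl)
  have e3 : ‖(f (x n + s • h) - f (x n)) - (f (x₀ + s • h) - f x₀)‖ < s * (ε/8) := by
    have := hN n hn
    rwa [dist_zero_right] at this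
  have hsplit : (f' (x n)) (s • h) - (f' x₀) (s • h)
      = -(f (x n + s • h) - f (x n) - (f' (x n)) (s • h))
        + ((f (x n + s • h) - f (x n)) - (f (x₀ + s • h) - f x₀))
        + (f (x₀ + s • h) - f x₀ - (f' x₀) (s • h)) := by abel
  have hb1 : ‖(f' (x n)) (s • h) - (f' x₀) (s • h)‖
      ≤ ε₁ * (s * ‖h‖) + s * (ε/8) + ε₁ * (s * ‖h‖) := by
    rw [hsplit]
    refine (norm_add_le _ _).trans ?_
    have t1 := (norm_add_le (-(f (x n + s • h) - f (x n) - (f' (x n)) (s • h)))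
      ((f (x n + s • h) - f (x n)) - (f (x₀ + s • h) - f x₀)))
    rw [norm_neg] at t1
    linarith
  have hLHS : ‖(f' (x n)) (s • h) - (f' x₀) (s • h)‖ = s * ‖f' (x n) h - f' x₀ h‖ := by
    rw [map_smul, map_smul, ← smul_sub, norm_smul, Real.norm_eq_abs, abs_of_nonneg hs.le]
  have hfin : ‖f' (x n) h - f' x₀ h‖ ≤ 2 * ε₁ * ‖h‖ + ε/8 := by
    have h2 : s * ‖f' (x n) h - f' x₀ h‖ ≤ s * (2 * ε₁ * ‖h‖ + ε/8) := by
      rw [← hLHS]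
      have : ε₁ * (s * ‖h‖) + s * (ε/8) + ε₁ * (s * ‖h‖)
          = s * (2 * ε₁ * ‖h‖ + ε/8) := by ring
      linarith
    exact le_of_mul_le_mul_left h2 hs
  have hkey : ε₁ * (‖h‖ + 1) = ε/4 := by
    rw [hε₁def]; field_simp
  have h2ε : 2 * ε₁ * ‖h‖ ≤ ε/2 := by nlinarith [hε₁.le]
  rw [dist_eq_norm]
  linarith

end Aux

/-- If `f'` maps `U`-bounded weakly `p`-compact subsets of `U` into relatively compact
subsets of `K(X,Y)`, then `f' : U → K(X,Y)` is `p`-convergent: for every `U`-bounded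
sequence weakly `p`-convergent to `x₀ ∈ U`, `f'(x n) → f'(x₀)` in operator norm. -/
theorem deriv_compact_imp_deriv_pConvergent
    {X Y : Type*} [NormedAddCommGroup X] [NormedSpace ℝ X] [CompleteSpace X]
    [NormedAddCommGroup Y] [NormedSpace ℝ Y] [CompleteSpace Y]
    (p : ℝ≥0∞) (hp : 1 ≤ p) (hp' : p ≠ ⊤)
    (U : Set X) (hU : IsOpen U) (hUc : Convex ℝ U)
    (f : X → Y) (f' : X → X →L[ℝ] Y) (hf : C1u U f f')
    (H : ∀ (c : ℕ → X) (c₀ : X), c₀ ∈ U → UBounded U (Set.range c ∪ {c₀}) →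
      WeaklyLpConvergentTo p c c₀ →
      (∀ z ∈ Set.range c ∪ {c₀}, IsCompactOperator (f' z)) ∧
      IsCompact (closure (f' '' (Set.range c ∪ {c₀})))) :
    ∀ (x : ℕ → X) (x₀ : X), x₀ ∈ U → UBoundedSeq U x →
      WeaklyLpConvergentTo p x x₀ →
      Filter.Tendsto (fun n => f' (x n)) Filter.atTop (nhds (f' x₀)) := by
  intro x x₀ hx₀ hxb hxc
  have hMfull : UBounded U (Set.range x ∪ {x₀}) := aux_insert hU hx₀ hxb
  obtain ⟨_, hcl⟩ := H x x₀ hx₀ hMfull hxc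
  have hpt : ∀ h : X, Filter.Tendsto (fun n => f' (x n) h) Filter.atTop (𝓝 (f' x₀ h)) :=
    aux_ptwise hp hp' hU hUc hf H x x₀ hx₀ hxb hxc
  apply tendsto_of_subseq_tendsto
  intro ns hns
  have hmem : ∀ j, f' (x (ns j)) ∈ closure (f' '' (Set.range x ∪ {x₀})) := fun j =>
    subset_closure ⟨x (ns j), Set.mem_union_left _ ⟨ns j, rfl⟩, rfl⟩
  obtain ⟨S, _, φ, hφ, hTend⟩ := hcl.isSeqCompact hmem
  refine ⟨φ, ?_⟩
  have hSeq : S = f' x₀ := by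
    ext h
    have h1 : Filter.Tendsto (fun j => f' (x (ns (φ j))) h) Filter.atTop (𝓝 (S h)) := by
      have hc : Continuous fun T : X →L[ℝ] Y => T h :=
        (ContinuousLinearMap.apply ℝ Y h).continuous
      exact ((hc.tendsto S).comp hTend).congr (fun j => rfl)
    have h2 : Filter.Tendsto (fun j => f' (x (ns (φ j))) h) Filter.atTop (𝓝 (f' x₀ h)) :=
      ((hpt h).comp (hns.comp hφ.tendsto_atTop)).congr (fun j => rfl)
    exact tendsto_nhds_unique h1 h2
  rw [← hSeq]
  exact hTend
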